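/- Let F^α G be a twisted group algebra of a finite group G, g ∈ G, and t_1,...,t_k left coset representatives of C_G(g). If the element a = Σ_i U_{t_i} U_g U_{t_i}^{-1} is central in F^α G, then U_g commutes with U_h for every h ∈ C_G(g). -/

import Mathlib

/-- `A` is a twisted group algebra `F^α G`: the units `U g` form an `F`-basis and multiply
according to the 2-cocycle `α`, i.e. `U_g U_h = α(g,h) U_{gh}`. -/
structure IsTwistedGroupAlgebra (F : Type) [Field F] (G : Type) [Group G]
    (A : Type) [Ring A] [Algebra F A] (U : G → Aˣ) (α : G → G → Fˣ) : Prop where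
  mul_eq : ∀ g h : G, (U g : A) * (U h : A) = (α g h : F) • (U (g * h) : A)
  indep : LinearIndependent F fun g => (U g : A)
  span : Submodule.span F (Set.range fun g => (U g : A)) = ⊤

/-- `t : Fin k → G` is a system of left coset representatives of the centralizer
`C_G(g)` in `G`. -/
def IsLeftTransversalOfCentralizer {G : Type} [Group G] (g : G) {k : ℕ}
    (t : Fin k → G) : Prop :=
  ∀ x : G, ∃! i : Fin k, (t i)⁻¹ * x ∈ Subgroup.centralizer {g}

/-- Conjugation formula in a twisted group algebra. -/
lemma conj_formula (F : Type) [Field F] (G : Type) [Group G]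
    (A : Type) [Ring A] [Algebra F A] (U : G → Aˣ) (α : G → G → Fˣ)
    (hA : IsTwistedGroupAlgebra F G A U α) (x y : G) :
    (U x : A) * (U y : A) * ((U x)⁻¹ : Aˣ) =
      ((α x y : F) * ((α (x * y * x⁻¹) x : F))⁻¹) • (U (x * y * x⁻¹) : A) := by
  have h1 : (U x : A) * (U y : A) = (α x y : F) • (U (x * y) : A) := hA.mul_eq x y
  have h2 : (U (x * y * x⁻¹) : A) * (U x : A)
      = (α (x * y * x⁻¹) x : F) • (U (x * y) : A) := by
    have := hA.mul_eq (x * y * x⁻¹) x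
    simpa [mul_assoc] using this
  have h3 : (U (x * y) : A) = ((α (x * y * x⁻¹) x : F))⁻¹ •
      ((U (x * y * x⁻¹) : A) * (U x : A)) := by
    rw [h2, smul_smul, inv_mul_cancel₀ (Units.ne_zero _), one_smul]
  calc (U x : A) * (U y : A) * ((U x)⁻¹ : Aˣ)
      = ((α x y : F) • (U (x * y) : A)) * ((U x)⁻¹ : Aˣ) := by rw [h1]
    _ = (α x y : F) • ((U (x * y) : A) * ((U x)⁻¹ : Aˣ)) := by rw [smul_mul_assoc]
    _ = (α x y : F) • (((α (x * y * x⁻¹) x : F))⁻¹ •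
          ((U (x * y * x⁻¹) : A) * (U x : A) * ((U x)⁻¹ : Aˣ))) := by
        rw [h3, smul_mul_assoc]
    _ = ((α x y : F) * ((α (x * y * x⁻¹) x : F))⁻¹) • (U (x * y * x⁻¹) : A) := by
        rw [mul_assoc, Units.mul_inv_cancel_right, smul_smul]

/-- if `a = Σᵢ U_{tᵢ} U_g U_{tᵢ}⁻¹` is central in `F^α G`, then `U_g`
commutes with `U_h` for every `h ∈ C_G(g)`. -/
theorem central_ray_element_commutes (F : Type) [Field F] (G : Type) [Group G] [Fintype G]
    (A : Type) [Ring A] [Algebra F A] (U : G → Aˣ) (α : G → G → Fˣ)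
    (hA : IsTwistedGroupAlgebra F G A U α) (g : G) {k : ℕ} (t : Fin k → G)
    (ht : IsLeftTransversalOfCentralizer g t)
    (hcentral : ∀ x : A, (∑ i : Fin k, ((U (t i) * U g * (U (t i))⁻¹ : Aˣ) : A)) * x
      = x * (∑ i : Fin k, ((U (t i) * U g * (U (t i))⁻¹ : Aˣ) : A))) :
    ∀ h ∈ Subgroup.centralizer {g}, (U g : A) * (U h : A) = (U h : A) * (U g : A) := by
  intro h hh
  have hhg : h * g = g * h := Subgroup.mem_centralizer_singleton_iff.mp hh
  set C := Subgroup.centralizer ({g} : Set G) with hC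
  -- the conjugates
  set gi : Fin k → G := fun i => t i * g * (t i)⁻¹ with hgi
  set β : Fin k → F := fun i => (α (t i) g : F) * ((α (gi i) (t i) : F))⁻¹ with hβ
  have hterm : ∀ i : Fin k, ((U (t i) * U g * (U (t i))⁻¹ : Aˣ) : A) = β i • (U (gi i) : A) := by
    intro i
    have := conj_formula F G A U α hA (t i) g
    simpa using this
  -- injectivity of gi
  have gi_inj : Function.Injective gi := by
    intro i i' hii
    have hmem : (t i')⁻¹ * t i ∈ C := by
      rw [hC, Subgroup.mem_centralizer_singleton_iff]
      have e : (t i')⁻¹ * (gi i) * t i = (t i')⁻¹ * (gi i') * t i := by rw [hii]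
      calc (t i')⁻¹ * t i * g = (t i')⁻¹ * (gi i) * t i := by simp only [hgi]; group
        _ = (t i')⁻¹ * (gi i') * t i := e
        _ = g * ((t i')⁻¹ * t i) := by simp only [hgi]; group
    obtain ⟨j, hj, hju⟩ := ht (t i)
    have hi : i = j := hju i (by simpa using C.one_mem)
    have hi' : i' = j := hju i' hmem
    rw [hi, hi']
  -- permutation σ from multiplication by h
  choose σ hσ hσu using fun i => ht (h * t i)
  have hconj : ∀ i : Fin k, h * gi i * h⁻¹ = gi (σ i) := by
    intro i
    have hc : (t (σ i))⁻¹ * (h * t i) ∈ C := hσ i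
    set c := (t (σ i))⁻¹ * (h * t i) with hcdef
    have hcg : c * g = g * c := Subgroup.mem_centralizer_singleton_iff.mp hc
    have hht : h * t i = t (σ i) * c := by rw [hcdef]; group
    calc h * gi i * h⁻¹ = (h * t i) * g * (h * t i)⁻¹ := by simp only [hgi]; group
      _ = t (σ i) * (c * g * c⁻¹) * (t (σ i))⁻¹ := by rw [hht]; group
      _ = t (σ i) * g * (t (σ i))⁻¹ := by rw [hcg]; group
      _ = gi (σ i) := rfl
  have σ_inj : Function.Injective σ := by
    intro i i' hσi
    have h1 : (t (σ i))⁻¹ * (h * t i) ∈ C := hσ i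
    have h2 : (t (σ i))⁻¹ * (h * t i') ∈ C := hσi ▸ hσ i'
    have hmem : (t i')⁻¹ * t i ∈ C := by
      have := C.mul_mem (C.inv_mem h2) h1
      have e : ((t (σ i))⁻¹ * (h * t i'))⁻¹ * ((t (σ i))⁻¹ * (h * t i)) = (t i')⁻¹ * t i := by
        group
      rwa [e] at this
    obtain ⟨j, hj, hju⟩ := ht (t i)
    have hi : i = j := hju i (by simpa using C.one_mem)
    have hi' : i' = j := hju i' hmem
    rw [hi, hi']
  -- the index j with t j in the centralizer
  obtain ⟨j, hj, _⟩ := ht 1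
  have htjC : t j ∈ C := by
    have : (t j)⁻¹ ∈ C := by simpa using hj
    simpa using C.inv_mem this
  have htjg : t j * g = g * t j := Subgroup.mem_centralizer_singleton_iff.mp htjC
  have hgij : gi j = g := by
    simp only [hgi]
    rw [htjg]; group
  have hσj : σ j = j := by
    refine (hσu j j ?_).symm
    have := C.mul_mem (C.inv_mem htjC) (C.mul_mem hh htjC)
    simpa [mul_assoc] using this
  -- the scalar for conjugation by h
  set γ : Fin k → F := fun i => (α h (gi i) : F) * ((α (h * gi i * h⁻¹) h : F))⁻¹ with hγ
  have hconjA : ∀ i : Fin k, (U h : A) * (U (gi i) : A) * ((U h)⁻¹ : Aˣ)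
      = γ i • (U (gi (σ i)) : A) := by
    intro i
    rw [← hconj i]
    exact conj_formula F G A U α hA h (gi i)
  -- centrality gives the key identity
  set a : A := ∑ i : Fin k, ((U (t i) * U g * (U (t i))⁻¹ : Aˣ) : A) with ha
  have hUhA : (U h : A) * a * ((U h)⁻¹ : Aˣ) = a := by
    rw [← hcentral (U h : A), mul_assoc, Units.mul_inv, mul_one]
  have key : ∑ i : Fin k, (γ i * β i) • (U (gi (σ i)) : A) = ∑ i : Fin k, β i • (U (gi i) : A) := by
    calc ∑ i : Fin k, (γ i * β i) • (U (gi (σ i)) : A)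
        = ∑ i : Fin k, β i • ((U h : A) * (U (gi i) : A) * ((U h)⁻¹ : Aˣ)) := by
          refine Finset.sum_congr rfl fun i _ => ?_
          rw [hconjA i, smul_smul, mul_comm (β i) (γ i)]
      _ = (U h : A) * a * ((U h)⁻¹ : Aˣ) := by
          rw [ha, Finset.sum_congr rfl fun i _ => hterm i, Finset.mul_sum, Finset.sum_mul]
          refine Finset.sum_congr rfl fun i _ => ?_
          rw [mul_smul_comm, smul_mul_assoc]
      _ = a := hUhA
      _ = ∑ i : Fin k, β i • (U (gi i) : A) := by
          rw [ha]; exact Finset.sum_congr rfl fun i _ => hterm i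
  -- reindex by the bijection σ
  have σ_bij : Function.Bijective σ := Finite.injective_iff_bijective.mp σ_inj
  set e : Fin k ≃ Fin k := Equiv.ofBijective σ σ_bij with he
  have key2 : ∑ i : Fin k, (γ (e.symm i) * β (e.symm i)) • (U (gi i) : A)
      = ∑ i : Fin k, β i • (U (gi i) : A) := by
    rw [← key]
    rw [← Equiv.sum_comp e (fun i => (γ (e.symm i) * β (e.symm i)) • (U (gi i) : A))]
    refine Finset.sum_congr rfl fun i _ => ?_
    have : e.symm (e i) = i := e.symm_apply_apply i
    rw [this]
    rfl
  -- linear independence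
  have li : LinearIndependent F fun i : Fin k => (U (gi i) : A) :=
    hA.indep.comp gi gi_inj
  have hcoef : ∀ i : Fin k, γ (e.symm i) * β (e.symm i) - β i = 0 := by
    have := linearIndependent_iff'.mp li Finset.univ
      (fun i => γ (e.symm i) * β (e.symm i) - β i) ?_
    · intro i; exact this i (Finset.mem_univ i)
    · calc ∑ i : Fin k, (γ (e.symm i) * β (e.symm i) - β i) • (U (gi i) : A)
          = ∑ i : Fin k, ((γ (e.symm i) * β (e.symm i)) • (U (gi i) : A)
              - β i • (U (gi i) : A)) :=
            Finset.sum_congr rfl fun i _ => sub_smul _ _ _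
        _ = (∑ i : Fin k, (γ (e.symm i) * β (e.symm i)) • (U (gi i) : A))
              - ∑ i : Fin k, β i • (U (gi i) : A) := Finset.sum_sub_distrib _ _
        _ = 0 := by rw [key2, sub_self]
  have hej : e.symm j = j := (Equiv.symm_apply_eq e).mpr hσj.symm
  have hβj : β j ≠ 0 := by
    simp only [hβ]
    exact mul_ne_zero (Units.ne_zero _) (inv_ne_zero (Units.ne_zero _))
  have hγj : γ j = 1 := by
    have h0 := hcoef j
    rw [hej, sub_eq_zero] at h0
    exact mul_right_cancel₀ hβj (by rw [h0, one_mul])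
  -- conclude
  have hfin : (U h : A) * (U g : A) * ((U h)⁻¹ : Aˣ) = (U g : A) := by
    have := hconjA j
    rw [hσj, hgij, hγj, one_smul] at this
    exact this
  calc (U g : A) * (U h : A) = (U h : A) * (U g : A) * ((U h)⁻¹ : Aˣ) * (U h : A) := by
        rw [hfin]
    _ = (U h : A) * (U g : A) := by rw [mul_assoc, Units.inv_mul, mul_one]
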